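/- Assume k has characteristic 0. Let a, b ∈ C projectively centralize x, i.e. c_{a,x} ∘ c_{x,a} = λ_a · id_{x⊗a} and c_{b,x} ∘ c_{x,b} = λ_b · id_{x⊗b} for scalars λ_a, λ_b ∈ k^×. If the Q_{Dx}-modules (a, f) and (b, g) both satisfy the relation φ, i.e. φ(f) := f^{∗2} ∘ (φ ⊗ id_a) = 0 and φ(g) = 0, then their fusion product (a ⊗ b, f ⊗̂ g) satisfies the relation φ: φ(f ⊗̂ g) = 0. Moreover, if a projectively centralizes x and (m, h) is any Q_{Dx}-module satisfying the relation φ, then (a ⊗ m, f ⊗̂ h) satisfies the relation φ. -/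

import Mathlib

/-!
Statement 11: modules over the quiver of the double `Dx` satisfying the canonical relation `φ`
are closed under fusion, provided the underlying objects projectively centralize `x`.
-/

open CategoryTheory MonoidalCategory

universe v u

variable {k : Type*} [Field k]
variable {C : Type u} [Category.{v} C] [MonoidalCategory C] [BraidedCategory C]
  [Preadditive C] [CategoryTheory.Linear k C] [MonoidalPreadditive C] [MonoidalLinear k C]

/-- The fusion product `f ⊗̂ g` of two modules over the Drinfeld quiver `Q_z` of an object `z`
of the Drinfeld center. -/
noncomputable def fus (z : CategoryTheory.Center C) {a b : C}
    (f : z.1 ⊗ a ⟶ a) (g : z.1 ⊗ b ⟶ b) : z.1 ⊗ (a ⊗ b) ⟶ a ⊗ b :=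
  (α_ z.1 a b).inv ≫ (f ▷ b)
    + (α_ z.1 a b).inv ≫ ((z.2.β a).hom ▷ b) ≫ (α_ a z.1 b).hom ≫ (a ◁ g)

/-- The morphism `φ(f) = f^{∗2} ∘ (φ ⊗ id_a)` for a morphism `φ : 𝟙_C ⟶ z ⊗ z` and a module
`(a, f)` over `Q_z`; the module satisfies the relation `φ` iff `φ(f) = 0`. -/
noncomputable def relTwo (z : CategoryTheory.Center C) (φ : 𝟙_ C ⟶ z.1 ⊗ z.1)
    {a : C} (f : z.1 ⊗ a ⟶ a) : (𝟙_ C) ⊗ a ⟶ a :=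
  (φ ▷ a) ≫ (α_ z.1 z.1 a).hom ≫ (z.1 ◁ f) ≫ f

section
set_option maxHeartbeats 1000000
set_option linter.unusedSectionVars false
open BraidedCategory

theorem retractW {x xS a t : C} (ev : xS ⊗ x ⟶ 𝟙_ C) (coev : 𝟙_ C ⟶ x ⊗ xS)
    (zag : (xS ◁ coev) ≫ (α_ xS x xS).inv ≫ (ev ▷ xS) = (ρ_ xS).hom ≫ (λ_ xS).inv)
    (w : xS ⊗ a ⟶ t)
    (hw : (coev ▷ a) ≫ (α_ x xS a).hom ≫ (x ◁ w) = 0) : w = 0 := by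
  have bracket : (xS ◁ (λ_ a).inv) ≫ (xS ◁ (coev ▷ a)) ≫ (xS ◁ (α_ x xS a).hom) ≫
      (α_ xS x (xS ⊗ a)).inv ≫ (ev ▷ (xS ⊗ a)) ≫ (λ_ (xS ⊗ a)).hom = 𝟙 (xS ⊗ a) := by
    have e1 : (xS ◁ (λ_ a).inv) ≫ (xS ◁ (coev ▷ a)) ≫ (xS ◁ (α_ x xS a).hom) ≫
        (α_ xS x (xS ⊗ a)).inv ≫ (ev ▷ (xS ⊗ a)) ≫ (λ_ (xS ⊗ a)).hom =
        (((ρ_ xS).inv ≫ (xS ◁ coev) ≫ (α_ xS x xS).inv ≫ (ev ▷ xS) ≫ (λ_ xS).hom) ▷ a) := by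
      monoidal
    rw [e1, reassoc_of% zag]
    simp
  have b2 := reassoc_of% bracket
  calc w = (xS ◁ (λ_ a).inv) ≫ (xS ◁ (coev ▷ a)) ≫ (xS ◁ (α_ x xS a).hom) ≫
      (α_ xS x (xS ⊗ a)).inv ≫ (ev ▷ (xS ⊗ a)) ≫ (λ_ (xS ⊗ a)).hom ≫ w := (b2 w).symm
    _ = (xS ◁ (λ_ a).inv) ≫ (xS ◁ ((coev ▷ a) ≫ (α_ x xS a).hom ≫ (x ◁ w))) ≫
      (α_ xS x t).inv ≫ (ev ▷ t) ≫ (λ_ t).hom := by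
        simp only [MonoidalCategory.whiskerLeft_comp, Category.assoc]
        congr 3
        rw [associator_inv_naturality_right_assoc, whisker_exchange_assoc]
        simp
    _ = 0 := by rw [hw]; simp


theorem binv {x a : C} {lamA : k} (hlamA : lamA ≠ 0)
    (hax : (β_ x a).hom ≫ (β_ a x).hom = lamA • 𝟙 (x ⊗ a)) :
    (β_ x a).inv = lamA⁻¹ • (β_ a x).hom := by
  calc (β_ x a).inv = (β_ x a).inv ≫ (lamA⁻¹ • ((β_ x a).hom ≫ (β_ a x).hom)) := by
        rw [hax]; simp [smul_smul, inv_mul_cancel₀ hlamA]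
    _ = lamA⁻¹ • (β_ a x).hom := by simp

theorem key1 {x xS a : C} (coev : 𝟙_ C ⟶ x ⊗ xS)
    {lamA : k} (hlamA : lamA ≠ 0)
    (hax : (β_ x a).hom ≫ (β_ a x).hom = lamA • 𝟙 (x ⊗ a)) :
    (coev ▷ a) ≫ (α_ x xS a).hom ≫ (x ◁ ((β_ xS a).hom ≫ (β_ a xS).hom)) =
      lamA⁻¹ • ((coev ▷ a) ≫ (α_ x xS a).hom) := by
  have nat1 : (coev ▷ a) ≫ (β_ (x ⊗ xS) a).hom = (β_ (𝟙_ C) a).hom ≫ (a ◁ coev) :=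
    braiding_naturality_left coev a
  rw [braiding_tensor_left_hom] at nat1
  calc (coev ▷ a) ≫ (α_ x xS a).hom ≫ (x ◁ ((β_ xS a).hom ≫ (β_ a xS).hom))
      = ((coev ▷ a) ≫ (α_ x xS a).hom ≫ (x ◁ (β_ xS a).hom) ≫ (α_ x a xS).inv ≫
          ((β_ x a).hom ▷ xS) ≫ (α_ a x xS).hom) ≫ ((α_ a x xS).inv ≫
          ((β_ x a).inv ▷ xS) ≫ (α_ x a xS).hom ≫ (x ◁ (β_ a xS).hom)) := by
        simp only [Category.assoc, MonoidalCategory.whiskerLeft_comp, Iso.hom_inv_id_assoc]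
        slice_rhs 5 6 => rw [← comp_whiskerRight, Iso.hom_inv_id, id_whiskerRight]
        simp
    _ = ((β_ (𝟙_ C) a).hom ≫ (a ◁ coev)) ≫ ((α_ a x xS).inv ≫
          ((β_ x a).inv ▷ xS) ≫ (α_ x a xS).hom ≫ (x ◁ (β_ a xS).hom)) := by
        rw [nat1]
    _ = lamA⁻¹ • ((β_ (𝟙_ C) a).hom ≫ (a ◁ coev) ≫ (α_ a x xS).inv ≫
          ((β_ a x).hom ▷ xS) ≫ (α_ x a xS).hom ≫ (x ◁ (β_ a xS).hom)) := by
        rw [binv hlamA hax]; simp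
    _ = lamA⁻¹ • ((β_ (𝟙_ C) a).hom ≫ (a ◁ coev) ≫ (β_ a (x ⊗ xS)).hom ≫
          (α_ x xS a).hom) := by
        rw [braiding_tensor_right_hom]; simp
    _ = lamA⁻¹ • ((β_ (𝟙_ C) a).hom ≫ (β_ a (𝟙_ C)).hom ≫ (coev ▷ a) ≫
          (α_ x xS a).hom) := by
        rw [braiding_naturality_right_assoc]
    _ = lamA⁻¹ • ((coev ▷ a) ≫ (α_ x xS a).hom) := by
        rw [braiding_tensorUnit_left, braiding_tensorUnit_right]; simp

theorem dmono {x xS a : C} (ev : xS ⊗ x ⟶ 𝟙_ C) (coev : 𝟙_ C ⟶ x ⊗ xS)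
    (zag : (xS ◁ coev) ≫ (α_ xS x xS).inv ≫ (ev ▷ xS) = (ρ_ xS).hom ≫ (λ_ xS).inv)
    {lamA : k} (hlamA : lamA ≠ 0)
    (hax : (β_ x a).hom ≫ (β_ a x).hom = lamA • 𝟙 (x ⊗ a)) :
    (β_ a xS).inv = lamA • (β_ xS a).hom := by
  have hw : (coev ▷ a) ≫ (α_ x xS a).hom ≫
      (x ◁ (𝟙 (xS ⊗ a) - lamA • ((β_ xS a).hom ≫ (β_ a xS).hom))) = 0 := by
    have expand : x ◁ (𝟙 (xS ⊗ a) - lamA • ((β_ xS a).hom ≫ (β_ a xS).hom)) =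
        x ◁ (𝟙 (xS ⊗ a)) - lamA • (x ◁ ((β_ xS a).hom ≫ (β_ a xS).hom)) := by
      simp only [sub_eq_add_neg, MonoidalPreadditive.whiskerLeft_add, ← neg_smul,
        MonoidalLinear.whiskerLeft_smul, MonoidalCategory.whiskerLeft_comp]
    rw [expand, Preadditive.comp_sub, Preadditive.comp_sub, Linear.comp_smul,
      Linear.comp_smul, key1 coev hlamA hax]
    simp [smul_smul, mul_inv_cancel₀ hlamA]
  have hzero := retractW ev coev zag _ hw
  have hone : 𝟙 (xS ⊗ a) = lamA • ((β_ xS a).hom ≫ (β_ a xS).hom) := by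
    rwa [sub_eq_zero] at hzero
  calc (β_ a xS).inv = 𝟙 (xS ⊗ a) ≫ (β_ a xS).inv := by simp
    _ = (lamA • ((β_ xS a).hom ≫ (β_ a xS).hom)) ≫ (β_ a xS).inv := by rw [← hone]
    _ = lamA • (β_ xS a).hom := by simp

theorem psi_comp {z n y1 y2 : C} (ψ : 𝟙_ C ⟶ y1 ⊗ y2) (j₁ : y1 ⟶ z) (j₂ : y2 ⟶ z)
    (u : z ⊗ n ⟶ n) :
    ((ψ ≫ (j₁ ⊗ₘ j₂)) ▷ n) ≫ (α_ z z n).hom ≫ (z ◁ u) ≫ u =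
      (ψ ▷ n) ≫ (α_ y1 y2 n).hom ≫ (y1 ◁ ((j₂ ▷ n) ≫ u)) ≫ ((j₁ ▷ n) ≫ u) := by
  calc ((ψ ≫ (j₁ ⊗ₘ j₂)) ▷ n) ≫ (α_ z z n).hom ≫ (z ◁ u) ≫ u
      = (ψ ▷ n) ≫ ((j₁ ▷ y2) ▷ n) ≫ ((z ◁ j₂) ▷ n) ≫ (α_ z z n).hom ≫ (z ◁ u) ≫ u := by
        simp [MonoidalCategory.tensorHom_def]
    _ = (ψ ▷ n) ≫ ((j₁ ▷ y2) ▷ n) ≫ (α_ z y2 n).hom ≫ (z ◁ (j₂ ▷ n)) ≫ (z ◁ u) ≫ u := by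
        rw [associator_naturality_middle_assoc]
    _ = (ψ ▷ n) ≫ (α_ y1 y2 n).hom ≫ (j₁ ▷ (y2 ⊗ n)) ≫ (z ◁ ((j₂ ▷ n) ≫ u)) ≫ u := by
        rw [associator_naturality_left_assoc]
        simp only [MonoidalCategory.whiskerLeft_comp, Category.assoc]
    _ = (ψ ▷ n) ≫ (α_ y1 y2 n).hom ≫ (y1 ◁ ((j₂ ▷ n) ≫ u)) ≫ ((j₁ ▷ n) ≫ u) := by
        rw [← whisker_exchange_assoc]

theorem relTwo_decomp (Dx : CategoryTheory.Center C) {x xS : C} (coev : 𝟙_ C ⟶ x ⊗ xS)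
    (ι₁ : x ⟶ Dx.1) (ι₂ : xS ⟶ Dx.1) (φ : 𝟙_ C ⟶ Dx.1 ⊗ Dx.1)
    (hφ : φ = coev ≫ (ι₁ ⊗ₘ ι₂) - coev ≫ (β_ x xS).hom ≫ (ι₂ ⊗ₘ ι₁))
    {n : C} (u : Dx.1 ⊗ n ⟶ n) :
    relTwo Dx φ u =
      (coev ▷ n) ≫ (α_ x xS n).hom ≫ (x ◁ ((ι₂ ▷ n) ≫ u)) ≫ ((ι₁ ▷ n) ≫ u)
      - ((coev ≫ (β_ x xS).hom) ▷ n) ≫ (α_ xS x n).hom ≫ (xS ◁ ((ι₁ ▷ n) ≫ u)) ≫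
          ((ι₂ ▷ n) ≫ u) := by
  unfold relTwo
  rw [hφ]
  have hsub : ((coev ≫ (ι₁ ⊗ₘ ι₂) - coev ≫ (β_ x xS).hom ≫ (ι₂ ⊗ₘ ι₁)) ▷ n) =
      ((coev ≫ (ι₁ ⊗ₘ ι₂)) ▷ n) - ((coev ≫ (β_ x xS).hom ≫ (ι₂ ⊗ₘ ι₁)) ▷ n) := by
    rw [eq_sub_iff_add_eq, ← MonoidalPreadditive.add_whiskerRight, sub_add_cancel]
  rw [hsub, Preadditive.sub_comp]
  have h1 := psi_comp (z := Dx.1) coev ι₁ ι₂ u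
  have h2 := psi_comp (z := Dx.1) (coev ≫ (β_ x xS).hom) ι₂ ι₁ u
  simp only [Category.assoc] at h1 h2 ⊢
  rw [h1, h2]

theorem fus_comp₁ (Dx : CategoryTheory.Center C) {x a m : C} (ι₁ : x ⟶ Dx.1)
    (hβ₁ : (ι₁ ▷ a) ≫ (Dx.2.β a).hom = (β_ x a).hom ≫ (a ◁ ι₁))
    (f : Dx.1 ⊗ a ⟶ a) (h : Dx.1 ⊗ m ⟶ m) :
    (ι₁ ▷ (a ⊗ m)) ≫ fus Dx f h =
      (α_ x a m).inv ≫ (((ι₁ ▷ a) ≫ f) ▷ m)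
      + (α_ x a m).inv ≫ ((β_ x a).hom ▷ m) ≫ (α_ a x m).hom ≫ (a ◁ ((ι₁ ▷ m) ≫ h)) := by
  unfold fus
  rw [Preadditive.comp_add]
  congr 1
  · rw [associator_inv_naturality_left_assoc, ← comp_whiskerRight]
  · rw [associator_inv_naturality_left_assoc, ← comp_whiskerRight_assoc, hβ₁,
      comp_whiskerRight_assoc, associator_naturality_middle_assoc,
      ← MonoidalCategory.whiskerLeft_comp]

theorem fus_comp₂ (Dx : CategoryTheory.Center C) {xS a m : C} (ι₂ : xS ⟶ Dx.1)
    (hβ₂ : (ι₂ ▷ a) ≫ (Dx.2.β a).hom = (β_ a xS).inv ≫ (a ◁ ι₂))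
    (f : Dx.1 ⊗ a ⟶ a) (h : Dx.1 ⊗ m ⟶ m) :
    (ι₂ ▷ (a ⊗ m)) ≫ fus Dx f h =
      (α_ xS a m).inv ≫ (((ι₂ ▷ a) ≫ f) ▷ m)
      + (α_ xS a m).inv ≫ ((β_ a xS).inv ▷ m) ≫ (α_ a xS m).hom ≫ (a ◁ ((ι₂ ▷ m) ≫ h)) := by
  unfold fus
  rw [Preadditive.comp_add]
  congr 1
  · rw [associator_inv_naturality_left_assoc, ← comp_whiskerRight]
  · rw [associator_inv_naturality_left_assoc, ← comp_whiskerRight_assoc, hβ₂,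
      comp_whiskerRight_assoc, associator_naturality_middle_assoc,
      ← MonoidalCategory.whiskerLeft_comp]

theorem D1a {x xS a m : C} (coev : 𝟙_ C ⟶ x ⊗ xS) (F1 : x ⊗ a ⟶ a) (F2 : xS ⊗ a ⟶ a) :
    (coev ▷ (a ⊗ m)) ≫ (α_ x xS (a ⊗ m)).hom ≫ (x ◁ ((α_ xS a m).inv ≫ (F2 ▷ m))) ≫
      ((α_ x a m).inv ≫ (F1 ▷ m)) =
    (α_ (𝟙_ C) a m).inv ≫
      (((coev ▷ a) ≫ (α_ x xS a).hom ≫ (x ◁ F2) ≫ F1) ▷ m) := by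
  monoidal

theorem D1b {x xS a m : C} (coev : 𝟙_ C ⟶ x ⊗ xS) (F1 : x ⊗ a ⟶ a) (F2 : xS ⊗ a ⟶ a) :
    ((coev ≫ (β_ x xS).hom) ▷ (a ⊗ m)) ≫ (α_ xS x (a ⊗ m)).hom ≫
      (xS ◁ ((α_ x a m).inv ≫ (F1 ▷ m))) ≫ ((α_ xS a m).inv ≫ (F2 ▷ m)) =
    (α_ (𝟙_ C) a m).inv ≫
      ((((coev ≫ (β_ x xS).hom) ▷ a) ≫ (α_ xS x a).hom ≫ (xS ◁ F1) ≫ F2) ▷ m) := by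
  monoidal

-- cross term cancellation 1 : (F2 inner, crossing+H1 outer) vs (crossing+H1 inner, F2 outer)
theorem D2 {x xS a m : C} (coev : 𝟙_ C ⟶ x ⊗ xS) (F2 : xS ⊗ a ⟶ a) (H1 : x ⊗ m ⟶ m) :
    (coev ▷ (a ⊗ m)) ≫ (α_ x xS (a ⊗ m)).hom ≫ (x ◁ ((α_ xS a m).inv ≫ (F2 ▷ m))) ≫
      ((α_ x a m).inv ≫ ((β_ x a).hom ▷ m) ≫ (α_ a x m).hom ≫ (a ◁ H1)) =
    ((coev ≫ (β_ x xS).hom) ▷ (a ⊗ m)) ≫ (α_ xS x (a ⊗ m)).hom ≫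
      (xS ◁ ((α_ x a m).inv ≫ ((β_ x a).hom ▷ m) ≫ (α_ a x m).hom ≫ (a ◁ H1))) ≫
      ((α_ xS a m).inv ≫ (F2 ▷ m)) := by
  calc (coev ▷ (a ⊗ m)) ≫ (α_ x xS (a ⊗ m)).hom ≫ (x ◁ ((α_ xS a m).inv ≫ (F2 ▷ m))) ≫
      ((α_ x a m).inv ≫ ((β_ x a).hom ▷ m) ≫ (α_ a x m).hom ≫ (a ◁ H1))
      = (coev ▷ (a ⊗ m)) ≫ (α_ (x ⊗ xS) a m).inv ≫ ((α_ x xS a).hom ▷ m) ≫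
        (((x ◁ F2) ≫ (β_ x a).hom) ▷ m) ≫ (α_ a x m).hom ≫ (a ◁ H1) := by
        rw [comp_whiskerRight]; monoidal
    _ = (coev ▷ (a ⊗ m)) ≫ (α_ (x ⊗ xS) a m).inv ≫ ((α_ x xS a).hom ▷ m) ≫
        ((((β_ x (xS ⊗ a)).hom) ≫ (F2 ▷ x)) ▷ m) ≫ (α_ a x m).hom ≫ (a ◁ H1) := by
        rw [braiding_naturality_right]
    _ = (coev ▷ (a ⊗ m)) ≫ (α_ (x ⊗ xS) a m).inv ≫ ((α_ x xS a).hom ▷ m) ≫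
        ((α_ x xS a).inv ▷ m) ≫ (((β_ x xS).hom ▷ a) ▷ m) ≫ ((α_ xS x a).hom ▷ m) ≫
        ((xS ◁ (β_ x a).hom) ▷ m) ≫ ((α_ xS a x).inv ▷ m) ≫ ((F2 ▷ x) ▷ m) ≫
        (α_ a x m).hom ≫ (a ◁ H1) := by
        rw [braiding_tensor_right_hom]
        simp only [comp_whiskerRight, Category.assoc]
    _ = (coev ▷ (a ⊗ m)) ≫ (α_ (x ⊗ xS) a m).inv ≫ ((α_ x xS a).hom ▷ m) ≫
        ((α_ x xS a).inv ▷ m) ≫ (((β_ x xS).hom ▷ a) ▷ m) ≫ ((α_ xS x a).hom ▷ m) ≫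
        ((xS ◁ (β_ x a).hom) ▷ m) ≫ ((α_ xS a x).inv ▷ m) ≫ (α_ (xS ⊗ a) x m).hom ≫
        ((xS ⊗ a) ◁ H1) ≫ (F2 ▷ m) := by
        rw [associator_naturality_left_assoc, ← whisker_exchange]
    _ = ((coev ≫ (β_ x xS).hom) ▷ (a ⊗ m)) ≫ (α_ xS x (a ⊗ m)).hom ≫
        (xS ◁ ((α_ x a m).inv ≫ ((β_ x a).hom ▷ m) ≫ (α_ a x m).hom ≫ (a ◁ H1))) ≫
        ((α_ xS a m).inv ≫ (F2 ▷ m)) := by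
        rw [comp_whiskerRight]; monoidal

-- cross term cancellation 2 : with the inverse braiding
theorem D3 {x xS a m : C} (coev : 𝟙_ C ⟶ x ⊗ xS) (F1 : x ⊗ a ⟶ a) (H2 : xS ⊗ m ⟶ m) :
    (coev ▷ (a ⊗ m)) ≫ (α_ x xS (a ⊗ m)).hom ≫
      (x ◁ ((α_ xS a m).inv ≫ ((β_ a xS).inv ▷ m) ≫ (α_ a xS m).hom ≫ (a ◁ H2))) ≫
      ((α_ x a m).inv ≫ (F1 ▷ m)) =
    ((coev ≫ (β_ x xS).hom) ▷ (a ⊗ m)) ≫ (α_ xS x (a ⊗ m)).hom ≫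
      (xS ◁ ((α_ x a m).inv ≫ (F1 ▷ m))) ≫
      ((α_ xS a m).inv ≫ ((β_ a xS).inv ▷ m) ≫ (α_ a xS m).hom ≫ (a ◁ H2)) := by
  have inat : (xS ◁ F1) ≫ (β_ a xS).inv = (β_ (x ⊗ a) xS).inv ≫ (F1 ▷ xS) := by
    rw [Iso.eq_inv_comp, ← braiding_naturality_left_assoc]
    simp
  symm
  calc ((coev ≫ (β_ x xS).hom) ▷ (a ⊗ m)) ≫ (α_ xS x (a ⊗ m)).hom ≫
      (xS ◁ ((α_ x a m).inv ≫ (F1 ▷ m))) ≫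
      ((α_ xS a m).inv ≫ ((β_ a xS).inv ▷ m) ≫ (α_ a xS m).hom ≫ (a ◁ H2))
      = (coev ▷ (a ⊗ m)) ≫ ((β_ x xS).hom ▷ (a ⊗ m)) ≫ (α_ (xS ⊗ x) a m).inv ≫
        ((α_ xS x a).hom ▷ m) ≫ (((xS ◁ F1) ≫ (β_ a xS).inv) ▷ m) ≫
        (α_ a xS m).hom ≫ (a ◁ H2) := by
        rw [comp_whiskerRight]; monoidal
    _ = (coev ▷ (a ⊗ m)) ≫ ((β_ x xS).hom ▷ (a ⊗ m)) ≫ (α_ (xS ⊗ x) a m).inv ≫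
        ((α_ xS x a).hom ▷ m) ≫ (((β_ (x ⊗ a) xS).inv ≫ (F1 ▷ xS)) ▷ m) ≫
        (α_ a xS m).hom ≫ (a ◁ H2) := by
        rw [inat]
    _ = (coev ▷ (a ⊗ m)) ≫ ((β_ x xS).hom ▷ (a ⊗ m)) ≫ (α_ (xS ⊗ x) a m).inv ≫
        ((α_ xS x a).hom ▷ m) ≫ ((α_ xS x a).inv ▷ m) ≫ (((β_ x xS).inv ▷ a) ▷ m) ≫
        ((α_ x xS a).hom ▷ m) ≫ ((x ◁ (β_ a xS).inv) ▷ m) ≫ ((α_ x a xS).inv ▷ m) ≫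
        ((F1 ▷ xS) ▷ m) ≫ (α_ a xS m).hom ≫ (a ◁ H2) := by
        rw [braiding_tensor_left_inv]
        simp only [comp_whiskerRight, Category.assoc]
    _ = (coev ▷ (a ⊗ m)) ≫ (α_ (x ⊗ xS) a m).inv ≫
        ((((β_ x xS).hom ≫ (β_ x xS).inv) ▷ a) ▷ m) ≫
        ((α_ x xS a).hom ▷ m) ≫ ((x ◁ (β_ a xS).inv) ▷ m) ≫ ((α_ x a xS).inv ▷ m) ≫
        ((F1 ▷ xS) ▷ m) ≫ (α_ a xS m).hom ≫ (a ◁ H2) := by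
        rw [comp_whiskerRight]; monoidal
    _ = (coev ▷ (a ⊗ m)) ≫ (α_ (x ⊗ xS) a m).inv ≫
        ((α_ x xS a).hom ▷ m) ≫ ((x ◁ (β_ a xS).inv) ▷ m) ≫ ((α_ x a xS).inv ▷ m) ≫
        ((F1 ▷ xS) ▷ m) ≫ (α_ a xS m).hom ≫ (a ◁ H2) := by
        simp
    _ = (coev ▷ (a ⊗ m)) ≫ (α_ (x ⊗ xS) a m).inv ≫
        ((α_ x xS a).hom ▷ m) ≫ ((x ◁ (β_ a xS).inv) ▷ m) ≫ ((α_ x a xS).inv ▷ m) ≫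
        (α_ (x ⊗ a) xS m).hom ≫ ((x ⊗ a) ◁ H2) ≫ (F1 ▷ m) := by
        rw [associator_naturality_left_assoc, ← whisker_exchange]
    _ = (coev ▷ (a ⊗ m)) ≫ (α_ x xS (a ⊗ m)).hom ≫
        (x ◁ ((α_ xS a m).inv ≫ ((β_ a xS).inv ▷ m) ≫ (α_ a xS m).hom ≫ (a ◁ H2))) ≫
        ((α_ x a m).inv ≫ (F1 ▷ m)) := by
        monoidal

theorem key_nat {x xS a : C} (coev : 𝟙_ C ⟶ x ⊗ xS) :
    (coev ▷ a) ≫ (α_ x xS a).hom ≫ (x ◁ (β_ xS a).hom) ≫ (α_ x a xS).inv ≫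
      ((β_ x a).hom ▷ xS) ≫ (α_ a x xS).hom = (λ_ a).hom ≫ (ρ_ a).inv ≫ (a ◁ coev) := by
  have h := braiding_naturality_left coev a
  rw [braiding_tensor_left_hom, braiding_tensorUnit_left] at h
  simpa using h

theorem key_nat2 {x xS a : C} (coev : 𝟙_ C ⟶ x ⊗ xS) :
    ((coev ≫ (β_ x xS).hom) ▷ a) ≫ (α_ xS x a).hom ≫ (xS ◁ (β_ x a).hom) ≫
      (α_ xS a x).inv ≫ ((β_ xS a).hom ▷ x) ≫ (α_ a xS x).hom =
      (λ_ a).hom ≫ (ρ_ a).inv ≫ (a ◁ (coev ≫ (β_ x xS).hom)) := by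
  have h := braiding_naturality_left (coev ≫ (β_ x xS).hom) a
  rw [braiding_tensor_left_hom, braiding_tensorUnit_left] at h
  simpa using h

theorem D4a {x xS a m : C} (coev : 𝟙_ C ⟶ x ⊗ xS) (H1 : x ⊗ m ⟶ m) (H2 : xS ⊗ m ⟶ m) :
    (coev ▷ (a ⊗ m)) ≫ (α_ x xS (a ⊗ m)).hom ≫
      (x ◁ ((α_ xS a m).inv ≫ ((β_ xS a).hom ▷ m) ≫ (α_ a xS m).hom ≫ (a ◁ H2))) ≫
      ((α_ x a m).inv ≫ ((β_ x a).hom ▷ m) ≫ (α_ a x m).hom ≫ (a ◁ H1)) =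
    (λ_ (a ⊗ m)).hom ≫ (a ◁ (λ_ m).inv) ≫
      (a ◁ ((coev ▷ m) ≫ (α_ x xS m).hom ≫ (x ◁ H2) ≫ H1)) := by
  have we := whisker_exchange (β_ x a).hom H2
  calc (coev ▷ (a ⊗ m)) ≫ (α_ x xS (a ⊗ m)).hom ≫
      (x ◁ ((α_ xS a m).inv ≫ ((β_ xS a).hom ▷ m) ≫ (α_ a xS m).hom ≫ (a ◁ H2))) ≫
      ((α_ x a m).inv ≫ ((β_ x a).hom ▷ m) ≫ (α_ a x m).hom ≫ (a ◁ H1))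
      = (coev ▷ (a ⊗ m)) ≫ (α_ x xS (a ⊗ m)).hom ≫ (x ◁ (α_ xS a m).inv) ≫
        (x ◁ ((β_ xS a).hom ▷ m)) ≫ (x ◁ (α_ a xS m).hom) ≫ (x ◁ (a ◁ H2)) ≫
        (α_ x a m).inv ≫ ((β_ x a).hom ▷ m) ≫ (α_ a x m).hom ≫ (a ◁ H1) := by
        simp only [MonoidalCategory.whiskerLeft_comp, Category.assoc]
    _ = (coev ▷ (a ⊗ m)) ≫ (α_ x xS (a ⊗ m)).hom ≫ (x ◁ (α_ xS a m).inv) ≫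
        (x ◁ ((β_ xS a).hom ▷ m)) ≫ (x ◁ (α_ a xS m).hom) ≫
        (α_ x a (xS ⊗ m)).inv ≫ ((x ⊗ a) ◁ H2) ≫
        ((β_ x a).hom ▷ m) ≫ (α_ a x m).hom ≫ (a ◁ H1) := by
        rw [associator_inv_naturality_right_assoc]
    _ = (coev ▷ (a ⊗ m)) ≫ (α_ x xS (a ⊗ m)).hom ≫ (x ◁ (α_ xS a m).inv) ≫
        (x ◁ ((β_ xS a).hom ▷ m)) ≫ (x ◁ (α_ a xS m).hom) ≫
        (α_ x a (xS ⊗ m)).inv ≫ ((β_ x a).hom ▷ (xS ⊗ m)) ≫ ((a ⊗ x) ◁ H2) ≫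
        (α_ a x m).hom ≫ (a ◁ H1) := by
        rw [reassoc_of% we]
    _ = (coev ▷ (a ⊗ m)) ≫ (α_ x xS (a ⊗ m)).hom ≫ (x ◁ (α_ xS a m).inv) ≫
        (x ◁ ((β_ xS a).hom ▷ m)) ≫ (x ◁ (α_ a xS m).hom) ≫
        (α_ x a (xS ⊗ m)).inv ≫ ((β_ x a).hom ▷ (xS ⊗ m)) ≫
        (α_ a x (xS ⊗ m)).hom ≫ (a ◁ (x ◁ H2)) ≫ (a ◁ H1) := by
        rw [associator_naturality_right_assoc]
    _ = (α_ (𝟙_ C) a m).inv ≫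
        (((coev ▷ a) ≫ (α_ x xS a).hom ≫ (x ◁ (β_ xS a).hom) ≫ (α_ x a xS).inv ≫
          ((β_ x a).hom ▷ xS) ≫ (α_ a x xS).hom) ▷ m) ≫
        (α_ a (x ⊗ xS) m).hom ≫ (a ◁ (α_ x xS m).hom) ≫
        (a ◁ (x ◁ H2)) ≫ (a ◁ H1) := by
        monoidal
    _ = (α_ (𝟙_ C) a m).inv ≫ (((λ_ a).hom ≫ (ρ_ a).inv ≫ (a ◁ coev)) ▷ m) ≫
        (α_ a (x ⊗ xS) m).hom ≫ (a ◁ (α_ x xS m).hom) ≫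
        (a ◁ (x ◁ H2)) ≫ (a ◁ H1) := by
        rw [key_nat]
    _ = (λ_ (a ⊗ m)).hom ≫ (a ◁ (λ_ m).inv) ≫
        (a ◁ ((coev ▷ m) ≫ (α_ x xS m).hom ≫ (x ◁ H2) ≫ H1)) := by
        monoidal

theorem D4b {x xS a m : C} (coev : 𝟙_ C ⟶ x ⊗ xS) (H1 : x ⊗ m ⟶ m) (H2 : xS ⊗ m ⟶ m) :
    ((coev ≫ (β_ x xS).hom) ▷ (a ⊗ m)) ≫ (α_ xS x (a ⊗ m)).hom ≫
      (xS ◁ ((α_ x a m).inv ≫ ((β_ x a).hom ▷ m) ≫ (α_ a x m).hom ≫ (a ◁ H1))) ≫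
      ((α_ xS a m).inv ≫ ((β_ xS a).hom ▷ m) ≫ (α_ a xS m).hom ≫ (a ◁ H2)) =
    (λ_ (a ⊗ m)).hom ≫ (a ◁ (λ_ m).inv) ≫
      (a ◁ (((coev ≫ (β_ x xS).hom) ▷ m) ≫ (α_ xS x m).hom ≫ (xS ◁ H1) ≫ H2)) := by
  have we := whisker_exchange (β_ xS a).hom H1
  calc ((coev ≫ (β_ x xS).hom) ▷ (a ⊗ m)) ≫ (α_ xS x (a ⊗ m)).hom ≫
      (xS ◁ ((α_ x a m).inv ≫ ((β_ x a).hom ▷ m) ≫ (α_ a x m).hom ≫ (a ◁ H1))) ≫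
      ((α_ xS a m).inv ≫ ((β_ xS a).hom ▷ m) ≫ (α_ a xS m).hom ≫ (a ◁ H2))
      = ((coev ≫ (β_ x xS).hom) ▷ (a ⊗ m)) ≫ (α_ xS x (a ⊗ m)).hom ≫
        (xS ◁ (α_ x a m).inv) ≫ (xS ◁ ((β_ x a).hom ▷ m)) ≫ (xS ◁ (α_ a x m).hom) ≫
        (xS ◁ (a ◁ H1)) ≫
        (α_ xS a m).inv ≫ ((β_ xS a).hom ▷ m) ≫ (α_ a xS m).hom ≫ (a ◁ H2) := by
        simp only [MonoidalCategory.whiskerLeft_comp, Category.assoc]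
    _ = ((coev ≫ (β_ x xS).hom) ▷ (a ⊗ m)) ≫ (α_ xS x (a ⊗ m)).hom ≫
        (xS ◁ (α_ x a m).inv) ≫ (xS ◁ ((β_ x a).hom ▷ m)) ≫ (xS ◁ (α_ a x m).hom) ≫
        (α_ xS a (x ⊗ m)).inv ≫ ((xS ⊗ a) ◁ H1) ≫
        ((β_ xS a).hom ▷ m) ≫ (α_ a xS m).hom ≫ (a ◁ H2) := by
        rw [associator_inv_naturality_right_assoc]
    _ = ((coev ≫ (β_ x xS).hom) ▷ (a ⊗ m)) ≫ (α_ xS x (a ⊗ m)).hom ≫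
        (xS ◁ (α_ x a m).inv) ≫ (xS ◁ ((β_ x a).hom ▷ m)) ≫ (xS ◁ (α_ a x m).hom) ≫
        (α_ xS a (x ⊗ m)).inv ≫ ((β_ xS a).hom ▷ (x ⊗ m)) ≫ ((a ⊗ xS) ◁ H1) ≫
        (α_ a xS m).hom ≫ (a ◁ H2) := by
        rw [reassoc_of% we]
    _ = ((coev ≫ (β_ x xS).hom) ▷ (a ⊗ m)) ≫ (α_ xS x (a ⊗ m)).hom ≫
        (xS ◁ (α_ x a m).inv) ≫ (xS ◁ ((β_ x a).hom ▷ m)) ≫ (xS ◁ (α_ a x m).hom) ≫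
        (α_ xS a (x ⊗ m)).inv ≫ ((β_ xS a).hom ▷ (x ⊗ m)) ≫
        (α_ a xS (x ⊗ m)).hom ≫ (a ◁ (xS ◁ H1)) ≫ (a ◁ H2) := by
        rw [associator_naturality_right_assoc]
    _ = (α_ (𝟙_ C) a m).inv ≫
        ((((coev ≫ (β_ x xS).hom) ▷ a) ≫ (α_ xS x a).hom ≫ (xS ◁ (β_ x a).hom) ≫
          (α_ xS a x).inv ≫ ((β_ xS a).hom ▷ x) ≫ (α_ a xS x).hom) ▷ m) ≫
        (α_ a (xS ⊗ x) m).hom ≫ (a ◁ (α_ xS x m).hom) ≫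
        (a ◁ (xS ◁ H1)) ≫ (a ◁ H2) := by
        monoidal
    _ = (α_ (𝟙_ C) a m).inv ≫
        (((λ_ a).hom ≫ (ρ_ a).inv ≫ (a ◁ (coev ≫ (β_ x xS).hom))) ▷ m) ≫
        (α_ a (xS ⊗ x) m).hom ≫ (a ◁ (α_ xS x m).hom) ≫
        (a ◁ (xS ◁ H1)) ≫ (a ◁ H2) := by
        rw [key_nat2]
    _ = (λ_ (a ⊗ m)).hom ≫ (a ◁ (λ_ m).inv) ≫
        (a ◁ (((coev ≫ (β_ x xS).hom) ▷ m) ≫ (α_ xS x m).hom ≫ (xS ◁ H1) ≫ H2)) := by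
        monoidal

/-- Assume `char k = 0`.  Let `Dx ∈ Z(C)` be the double of an object `x` of the braided
category `C` (with right dual `xS = x^∗`), with canonical relation
`φ = coev ≫ (ι₁ ⊗ₘ ι₂) − coev ≫ c_{x,x^∗} ≫ (ι₂ ⊗ₘ ι₁) : 𝟙_C ⟶ Dx ⊗ Dx`.
If `a` and `b` projectively centralize `x` and the `Q_{Dx}`-modules `(a, f)`, `(b, g)` satisfy
the relation `φ`, then so does their fusion product `(a ⊗ b, f ⊗̂ g)`.  Moreover, if `a`
projectively centralizes `x` and `(a, f)` satisfies `φ`, then for every `Q_{Dx}`-module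
`(m, h)` satisfying `φ` the fusion product `(a ⊗ m, f ⊗̂ h)` satisfies `φ`. -/
theorem double_relation_closed_under_fusion [CharZero k]
    {x xS : C} (ev : xS ⊗ x ⟶ 𝟙_ C) (coev : 𝟙_ C ⟶ x ⊗ xS)
    (zig : (coev ▷ x) ≫ (α_ x xS x).hom ≫ (x ◁ ev) = (λ_ x).hom ≫ (ρ_ x).inv)
    (zag : (xS ◁ coev) ≫ (α_ xS x xS).inv ≫ (ev ▷ xS) = (ρ_ xS).hom ≫ (λ_ xS).inv)
    (Dx : CategoryTheory.Center C)
    (ι₁ : x ⟶ Dx.1) (ι₂ : xS ⟶ Dx.1) (p₁ : Dx.1 ⟶ x) (p₂ : Dx.1 ⟶ xS)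
    (hι₁p₁ : ι₁ ≫ p₁ = 𝟙 x) (hι₂p₂ : ι₂ ≫ p₂ = 𝟙 xS)
    (hι₁p₂ : ι₁ ≫ p₂ = 0) (hι₂p₁ : ι₂ ≫ p₁ = 0)
    (htotal : p₁ ≫ ι₁ + p₂ ≫ ι₂ = 𝟙 Dx.1)
    (hβ₁ : ∀ m : C, (ι₁ ▷ m) ≫ (Dx.2.β m).hom = (β_ x m).hom ≫ (m ◁ ι₁))
    (hβ₂ : ∀ m : C, (ι₂ ▷ m) ≫ (Dx.2.β m).hom = (β_ m xS).inv ≫ (m ◁ ι₂))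
    -- the canonical relation φ
    (φ : 𝟙_ C ⟶ Dx.1 ⊗ Dx.1)
    (hφ : φ = coev ≫ (ι₁ ⊗ₘ ι₂) - coev ≫ (β_ x xS).hom ≫ (ι₂ ⊗ₘ ι₁))
    -- `a` and `b` projectively centralize `x`
    {a b : C} (lamA lamB : k) (hlamA : lamA ≠ 0) (hlamB : lamB ≠ 0)
    (hax : (β_ x a).hom ≫ (β_ a x).hom = lamA • 𝟙 (x ⊗ a))
    (hbx : (β_ x b).hom ≫ (β_ b x).hom = lamB • 𝟙 (x ⊗ b))
    -- modules `(a, f)` and `(b, g)` satisfying the relation φ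
    (f : Dx.1 ⊗ a ⟶ a) (g : Dx.1 ⊗ b ⟶ b)
    (hf : relTwo Dx φ f = 0) (hg : relTwo Dx φ g = 0) :
    relTwo Dx φ (fus Dx f g) = 0 ∧
    (∀ {m : C} (h : Dx.1 ⊗ m ⟶ m), relTwo Dx φ h = 0 →
      relTwo Dx φ (fus Dx f h) = 0) := by
  have hdm : (β_ a xS).inv = lamA • (β_ xS a).hom := dmono ev coev zag hlamA hax
  have main : ∀ {m : C} (h : Dx.1 ⊗ m ⟶ m), relTwo Dx φ h = 0 →
      relTwo Dx φ (fus Dx f h) = 0 := by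
    intro m h hh
    rw [relTwo_decomp Dx coev ι₁ ι₂ φ hφ f] at hf
    rw [relTwo_decomp Dx coev ι₁ ι₂ φ hφ h] at hh
    have hf2 := sub_eq_zero.mp hf
    have hh2 := sub_eq_zero.mp hh
    rw [relTwo_decomp Dx coev ι₁ ι₂ φ hφ (fus Dx f h)]
    rw [fus_comp₁ Dx ι₁ (hβ₁ a) f h, fus_comp₂ Dx ι₂ (hβ₂ a) f h]
    simp only [MonoidalPreadditive.whiskerLeft_add, Preadditive.comp_add,
      Preadditive.add_comp, Category.assoc]
    set F1 := (ι₁ ▷ a) ≫ f with hF1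
    set F2 := (ι₂ ▷ a) ≫ f with hF2
    set H1 := (ι₁ ▷ m) ≫ h with hH1
    set H2 := (ι₂ ▷ m) ≫ h with hH2
    rw [D2 coev F2 H1, D3 coev F1 H2, D1a coev F1 F2, D1b coev F1 F2, hf2, hdm]
    simp only [MonoidalLinear.smul_whiskerRight, MonoidalLinear.whiskerLeft_smul,
      Linear.comp_smul, Linear.smul_comp]
    rw [D4a coev H1 H2, D4b coev H1 H2, hh2]
    abel
  exact ⟨main g hg, fun h hh => main h hh⟩

end
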